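/- arXiv:1301.4613 — 8 statements merged into one kernel-verified Lean document; each statement's English description precedes it below -/
import Mathlib

section
/- Let r1, r2 be cubic polynomials over ℂ with no common roots (including at infinity, i.e. their resultant as cubics is nonzero). Define h(x,y) = (r1(x)r2(y) - r2(x)r1(y))/(x-y), which is a symmetric biquadratic polynomial. Then res₂[h(x,y), h(y,z), y] = (x-z)² · μ · h(x,z), where μ = res₃[r1, r2] is the resultant of r1 and r2 and res₂ denotes the resultant of the two expressions regarded as degree-two polynomials in y. -/
namespace Stmt0

/-- Divided difference `(r(x)-r(y))/(x-y)` of the cubic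
`r(t) = a₃t³+a₂t²+a₁t+a₀`, in polynomial form. -/
def cubicDD (a₀ a₁ a₂ a₃ x y : ℂ) : ℂ :=
  a₃*(x^2 + x*y + y^2) + a₂*(x + y) + a₁

set_option maxRecDepth 8000 in
private lemma det4_aux (p q r s t u : ℂ) :
    (!![p, q, r, 0; 0, p, q, r; s, t, u, 0; 0, s, t, u] : Matrix (Fin 4) (Fin 4) ℂ).det
    = (p*u - r*s)^2 - (p*t - q*s)*(q*u - r*t) := by
  simp [Matrix.det_succ_row_zero, Fin.sum_univ_succ]
  simp +decide [Fin.succAbove]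
  ring

set_option maxRecDepth 20000 in
set_option maxHeartbeats 2000000 in
private lemma res3_aux (a₀ a₁ a₂ a₃ b₀ b₁ b₂ b₃ : ℂ) :
    Matrix.det !![a₃, a₂, a₁, a₀, 0, 0;
                  0, a₃, a₂, a₁, a₀, 0;
                  0, 0, a₃, a₂, a₁, a₀;
                  b₃, b₂, b₁, b₀, 0, 0;
                  0, b₃, b₂, b₁, b₀, 0;
                  0, 0, b₃, b₂, b₁, b₀]
    = a₃^3*b₀^3 - a₂*a₃^2*b₀^2*b₁ + a₁*a₃^2*b₀*b₁^2 - a₀*a₃^2*b₁^3 +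
      a₂^2*a₃*b₀^2*b₂ - 2*a₁*a₃^2*b₀^2*b₂ - a₁*a₂*a₃*b₀*b₁*b₂ + 3*a₀*a₃^2*b₀*b₁*b₂ +
      a₀*a₂*a₃*b₁^2*b₂ + a₁^2*a₃*b₀*b₂^2 - 2*a₀*a₂*a₃*b₀*b₂^2 - a₀*a₁*a₃*b₁*b₂^2 +
      a₀^2*a₃*b₂^3 - a₂^3*b₀^2*b₃ + 3*a₁*a₂*a₃*b₀^2*b₃ - 3*a₀*a₃^2*b₀^2*b₃ +
      a₁*a₂^2*b₀*b₁*b₃ - 2*a₁^2*a₃*b₀*b₁*b₃ - a₀*a₂*a₃*b₀*b₁*b₃ - a₀*a₂^2*b₁^2*b₃ +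
      2*a₀*a₁*a₃*b₁^2*b₃ - a₁^2*a₂*b₀*b₂*b₃ + 2*a₀*a₂^2*b₀*b₂*b₃ + a₀*a₁*a₃*b₀*b₂*b₃ +
      a₀*a₁*a₂*b₁*b₂*b₃ - 3*a₀^2*a₃*b₁*b₂*b₃ - a₀^2*a₂*b₂^2*b₃ + a₁^3*b₀*b₃^2 -
      3*a₀*a₁*a₂*b₀*b₃^2 + 3*a₀^2*a₃*b₀*b₃^2 - a₀*a₁^2*b₁*b₃^2 + 2*a₀^2*a₂*b₁*b₃^2 +
      a₀^2*a₁*b₂*b₃^2 - a₀^3*b₃^3 := by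
  simp [Matrix.det_succ_row_zero, Fin.sum_univ_succ]
  simp +decide [Fin.succAbove]
  ring

/-- for cubics `r1, r2` with nonzero resultant `μ` (no common
roots, including at infinity), the symmetric biquadratic
`h(x,y) = (r1(x)r2(y) - r2(x)r1(y))/(x-y)` satisfies
`res₂[h(x,y), h(y,z), y] = (x-z)² · μ · h(x,z)`, where `res₂` is the
determinant of the 4×4 Sylvester matrix of the two expressions regarded as
quadratics in `y`, and `μ = res₃[r1, r2]`. -/
theorem bezout_biquadratic_self_composition
    (a₀ a₁ a₂ a₃ b₀ b₁ b₂ b₃ : ℂ)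
    (r1 r2 : ℂ → ℂ)
    (hr1 : ∀ t, r1 t = a₃*t^3 + a₂*t^2 + a₁*t + a₀)
    (hr2 : ∀ t, r2 t = b₃*t^3 + b₂*t^2 + b₁*t + b₀)
    (h : ℂ → ℂ → ℂ)
    -- `h` is the divided difference `(r1(x)r2(y)-r2(x)r1(y))/(x-y)`,
    -- written in polynomial form:
    (hdef : ∀ x y, h x y =
      r2 x * cubicDD a₀ a₁ a₂ a₃ x y - r1 x * cubicDD b₀ b₁ b₂ b₃ x y)
    -- the coefficients of `h(x, ·)` as a quadratic in the second variable:
    (A₀ A₁ A₂ : ℂ → ℂ)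
    (hA : ∀ x y, h x y = A₂ x * y^2 + A₁ x * y + A₀ x)
    -- `μ = res₃[r1, r2]`, the resultant of the two cubics:
    (μ : ℂ)
    (hμ : μ = Matrix.det !![a₃, a₂, a₁, a₀, 0, 0;
                            0, a₃, a₂, a₁, a₀, 0;
                            0, 0, a₃, a₂, a₁, a₀;
                            b₃, b₂, b₁, b₀, 0, 0;
                            0, b₃, b₂, b₁, b₀, 0;
                            0, 0, b₃, b₂, b₁, b₀])
    (hμ0 : μ ≠ 0) :
    ∀ x z : ℂ,
      Matrix.det !![A₂ x, A₁ x, A₀ x, 0;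
                    0, A₂ x, A₁ x, A₀ x;
                    A₂ z, A₁ z, A₀ z, 0;
                    0, A₂ z, A₁ z, A₀ z]
        = (x - z)^2 * μ * h x z := by
  intro x z
  have hval : ∀ w : ℂ,
      A₀ w = r2 w * (a₃*w^2 + a₂*w + a₁) - r1 w * (b₃*w^2 + b₂*w + b₁)
      ∧ A₁ w = r2 w * (a₃*w + a₂) - r1 w * (b₃*w + b₂)
      ∧ A₂ w = r2 w * a₃ - r1 w * b₃ := by
    intro w
    have e0 := (hA w 0).symm.trans (hdef w 0)
    have e1 := (hA w 1).symm.trans (hdef w 1)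
    have em := (hA w (-1)).symm.trans (hdef w (-1))
    simp only [cubicDD] at e0 e1 em
    exact ⟨by linear_combination e0, by linear_combination (e1 - em)/2,
      by linear_combination (e1 + em)/2 - e0⟩
  obtain ⟨hx0, hx1, hx2⟩ := hval x
  obtain ⟨hz0, hz1, hz2⟩ := hval z
  rw [det4_aux, hx0, hx1, hx2, hz0, hz1, hz2, hdef x z, hμ, res3_aux]
  simp only [hr1, hr2, cubicDD]
  ring

end Stmt0
end

section
/- Let h(x,y) = c₀ + c₁(x+y) + c₂xy + c₃(x²+y²) + c₄xy(x+y) + c₅x²y² be a symmetric biquadratic polynomial over ℂ, and suppose x₀,x₁,x₂ ∈ ℂ are not all equal and satisfy: h(x₀,y) = (c₃+c₄x₀+c₅x₀²)(y-x₁)(y-x₂), h(x₁,y) = (c₃+c₄x₁+c₅x₁²)(y-x₂)(y-x₀), h(x₂,y) = (c₃+c₄x₂+c₅x₂²)(y-x₀)(y-x₁), as identities of polynomials in y. Then the coefficients satisfy c₁c₄ + c₃² = c₀c₅ + c₂c₃. -/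
/-- If a symmetric biquadratic `h` has a three-periodic orbit
`x₀, x₁, x₂` (not all equal), expressed by the three polynomial identities
in `y`, then the coefficients satisfy `c₁c₄ + c₃² = c₀c₅ + c₂c₃`. -/
theorem three_periodic_orbit_implies_idempotency_constraint
    (c₀ c₁ c₂ c₃ c₄ c₅ : ℂ)
    (h : ℂ → ℂ → ℂ)
    (hdef : ∀ x y, h x y =
      c₀ + c₁*(x+y) + c₂*x*y + c₃*(x^2+y^2) + c₄*x*y*(x+y) + c₅*x^2*y^2)
    (x₀ x₁ x₂ : ℂ)
    (hne : ¬ (x₀ = x₁ ∧ x₁ = x₂))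
    (h0 : ∀ y, h x₀ y = (c₃ + c₄*x₀ + c₅*x₀^2) * (y - x₁) * (y - x₂))
    (h1 : ∀ y, h x₁ y = (c₃ + c₄*x₁ + c₅*x₁^2) * (y - x₂) * (y - x₀))
    (h2 : ∀ y, h x₂ y = (c₃ + c₄*x₂ + c₅*x₂^2) * (y - x₀) * (y - x₁)) :
    c₁*c₄ + c₃^2 = c₀*c₅ + c₂*c₃ := by
  have E0 : ∀ y : ℂ, c₀ + c₁*(x₀+y) + c₂*x₀*y + c₃*(x₀^2+y^2) + c₄*x₀*y*(x₀+y) + c₅*x₀^2*y^2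
      = (c₃ + c₄*x₀ + c₅*x₀^2) * (y - x₁) * (y - x₂) := fun y => (hdef x₀ y).symm.trans (h0 y)
  have E1 : ∀ y : ℂ, c₀ + c₁*(x₁+y) + c₂*x₁*y + c₃*(x₁^2+y^2) + c₄*x₁*y*(x₁+y) + c₅*x₁^2*y^2
      = (c₃ + c₄*x₁ + c₅*x₁^2) * (y - x₂) * (y - x₀) := fun y => (hdef x₁ y).symm.trans (h1 y)
  have E2 : ∀ y : ℂ, c₀ + c₁*(x₂+y) + c₂*x₂*y + c₃*(x₂^2+y^2) + c₄*x₂*y*(x₂+y) + c₅*x₂^2*y^2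
      = (c₃ + c₄*x₂ + c₅*x₂^2) * (y - x₀) * (y - x₁) := fun y => (hdef x₂ y).symm.trans (h2 y)
  have hPQ : (c₂ - c₃ + c₄*(x₀+x₁+x₂) + c₅*(x₀*x₁+x₁*x₂+x₂*x₀) = 0) ∧
      (c₁ + c₃*(x₀+x₁+x₂) - c₅*(x₀*x₁*x₂) = 0) := by
    rcases (not_and_or.mp hne) with hd | hd
    · have hd' : x₀ - x₁ ≠ 0 := sub_ne_zero.mpr hd
      constructor
      · have hP0 : (x₀ - x₁) * (c₂ - c₃ + c₄*(x₀+x₁+x₂) + c₅*(x₀*x₁+x₁*x₂+x₂*x₀)) = 0 := by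
          linear_combination (E0 1 - E0 (-1) - E1 1 + E1 (-1))/2
        exact (mul_eq_zero.mp hP0).resolve_left hd'
      · have hQ0 : (x₀ - x₁) * (c₁ + c₃*(x₀+x₁+x₂) - c₅*(x₀*x₁*x₂)) = 0 := by
          linear_combination E0 0 - E1 0
        exact (mul_eq_zero.mp hQ0).resolve_left hd'
    · have hd' : x₁ - x₂ ≠ 0 := sub_ne_zero.mpr hd
      constructor
      · have hP0 : (x₁ - x₂) * (c₂ - c₃ + c₄*(x₀+x₁+x₂) + c₅*(x₀*x₁+x₁*x₂+x₂*x₀)) = 0 := by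
          linear_combination (E1 1 - E1 (-1) - E2 1 + E2 (-1))/2
        exact (mul_eq_zero.mp hP0).resolve_left hd'
      · have hQ0 : (x₁ - x₂) * (c₁ + c₃*(x₀+x₁+x₂) - c₅*(x₀*x₁*x₂)) = 0 := by
          linear_combination E1 0 - E2 0
        exact (mul_eq_zero.mp hQ0).resolve_left hd'
  obtain ⟨hP, hQ⟩ := hPQ
  have hF : c₀ - c₃*(x₀*x₁+x₁*x₂+x₂*x₀) - c₄*(x₀*x₁*x₂) = 0 := by
    linear_combination (E0 0 + E1 0 + E2 0 - (x₀+x₁+x₂)*hQ)/3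
  linear_combination c₄*hQ - c₃*hP - c₅*hF
end

section
/- Suppose three triplets (x₀,x₁,x₂), (y₀,y₁,y₂), (z₀,z₁,z₂) of complex numbers, assumed pairwise disjoint as sets, satisfy h(x₀,x₁; z₀,z₁,z₂; y₀,y₁,y₂) = 0 and h(y₀,y₁; z₀,z₁,z₂; x₀,x₁,x₂) = 0, where h(x,y; a₀,a₁,a₂; b₀,b₁,b₂) := [(x-a₀)(x-a₁)(x-a₂)(y-b₀)(y-b₁)(y-b₂) - (y-a₀)(y-a₁)(y-a₂)(x-b₀)(x-b₁)(x-b₂)]/(x-y). Then the three cubics r1(x)=(x-x₀)(x-x₁)(x-x₂), r2(x)=(x-y₀)(x-y₁)(x-y₂), r3(x)=(x-z₀)(x-z₁)(x-z₂) are linearly dependent: with γ₃ = -1, γ₂ = r3(x₁)/r2(x₁), γ₁ = r3(y₁)/r1(y₁), one has γ₁r1 + γ₂r2 + γ₃r3 = 0 as a polynomial identity (assuming r2(x₁) ≠ 0 and r1(y₁) ≠ 0). -/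
/-- The divided difference `(f(x)-f(y))/(x-y)` of the monic cubic with
roots `a₀,a₁,a₂`, as a polynomial expression. -/
noncomputable def cubicDD (a₀ a₁ a₂ x y : ℂ) : ℂ :=
  x^2 + x*y + y^2 - (a₀+a₁+a₂)*(x+y) + (a₀*a₁ + a₀*a₂ + a₁*a₂)

/-- The biquadratic
`h(x,y; a₀,a₁,a₂; b₀,b₁,b₂) =
 [(x-a₀)(x-a₁)(x-a₂)(y-b₀)(y-b₁)(y-b₂) - (y-a₀)(y-a₁)(y-a₂)(x-b₀)(x-b₁)(x-b₂)]/(x-y)`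
in polynomial (divided-difference) form. -/
noncomputable def hTriplet (x y a₀ a₁ a₂ b₀ b₁ b₂ : ℂ) : ℂ :=
  (x-b₀)*(x-b₁)*(x-b₂) * cubicDD a₀ a₁ a₂ x y
    - (x-a₀)*(x-a₁)*(x-a₂) * cubicDD b₀ b₁ b₂ x y

private lemma mulz {a b : ℂ} (h : a * b = 0) (ha : a ≠ 0) : b = 0 :=
  (mul_eq_zero.mp h).resolve_left ha

/-- A cubic vanishing at four distinct points vanishes identically. -/
private lemma cubicA (c₃ c₂ c₁ c₀ a b c d : ℂ)
    (hab : a ≠ b) (hac : a ≠ c) (had : a ≠ d) (hbc : b ≠ c) (hbd : b ≠ d) (hcd : c ≠ d)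
    (ha : c₃*a^3+c₂*a^2+c₁*a+c₀ = 0) (hb : c₃*b^3+c₂*b^2+c₁*b+c₀ = 0)
    (hc : c₃*c^3+c₂*c^2+c₁*c+c₀ = 0) (hd : c₃*d^3+c₂*d^2+c₁*d+c₀ = 0) :
    ∀ x, c₃*x^3+c₂*x^2+c₁*x+c₀ = 0 := by
  have e1 : c₃*(a^2+a*b+b^2)+c₂*(a+b)+c₁ = 0 :=
    mulz (show (a-b)*(c₃*(a^2+a*b+b^2)+c₂*(a+b)+c₁) = 0 by linear_combination ha - hb)
      (sub_ne_zero.mpr hab)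
  have e2 : c₃*(b^2+b*c+c^2)+c₂*(b+c)+c₁ = 0 :=
    mulz (show (b-c)*(c₃*(b^2+b*c+c^2)+c₂*(b+c)+c₁) = 0 by linear_combination hb - hc)
      (sub_ne_zero.mpr hbc)
  have e3 : c₃*(c^2+c*d+d^2)+c₂*(c+d)+c₁ = 0 :=
    mulz (show (c-d)*(c₃*(c^2+c*d+d^2)+c₂*(c+d)+c₁) = 0 by linear_combination hc - hd)
      (sub_ne_zero.mpr hcd)
  have f1 : c₃*(a+b+c)+c₂ = 0 :=
    mulz (show (a-c)*(c₃*(a+b+c)+c₂) = 0 by linear_combination e1 - e2)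
      (sub_ne_zero.mpr hac)
  have f2 : c₃*(b+c+d)+c₂ = 0 :=
    mulz (show (b-d)*(c₃*(b+c+d)+c₂) = 0 by linear_combination e2 - e3)
      (sub_ne_zero.mpr hbd)
  have g3 : c₃ = 0 :=
    mulz (show (a-d)*c₃ = 0 by linear_combination f1 - f2) (sub_ne_zero.mpr had)
  have g2 : c₂ = 0 := by linear_combination f1 - (a+b+c)*g3
  have g1 : c₁ = 0 := by linear_combination e1 - (a^2+a*b+b^2)*g3 - (a+b)*g2
  have g0 : c₀ = 0 := by linear_combination ha - a^3*g3 - a^2*g2 - a*g1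
  intro x
  linear_combination x^3*g3 + x^2*g2 + x*g1 + g0

/-- A cubic with a double root at `a` and simple roots at `c ≠ d` vanishes. -/
private lemma cubicB (c₃ c₂ c₁ c₀ a c d : ℂ)
    (hac : a ≠ c) (had : a ≠ d) (hcd : c ≠ d)
    (ha : c₃*a^3+c₂*a^2+c₁*a+c₀ = 0) (ha' : 3*c₃*a^2+2*c₂*a+c₁ = 0)
    (hc : c₃*c^3+c₂*c^2+c₁*c+c₀ = 0) (hd : c₃*d^3+c₂*d^2+c₁*d+c₀ = 0) :
    ∀ x, c₃*x^3+c₂*x^2+c₁*x+c₀ = 0 := by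
  have e2 : c₃*(a^2+a*c+c^2)+c₂*(a+c)+c₁ = 0 :=
    mulz (show (a-c)*(c₃*(a^2+a*c+c^2)+c₂*(a+c)+c₁) = 0 by linear_combination ha - hc)
      (sub_ne_zero.mpr hac)
  have e3 : c₃*(a^2+a*d+d^2)+c₂*(a+d)+c₁ = 0 :=
    mulz (show (a-d)*(c₃*(a^2+a*d+d^2)+c₂*(a+d)+c₁) = 0 by linear_combination ha - hd)
      (sub_ne_zero.mpr had)
  have f1 : c₃*(2*a+c)+c₂ = 0 :=
    mulz (show (a-c)*(c₃*(2*a+c)+c₂) = 0 by linear_combination ha' - e2)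
      (sub_ne_zero.mpr hac)
  have f2 : c₃*(2*a+d)+c₂ = 0 :=
    mulz (show (a-d)*(c₃*(2*a+d)+c₂) = 0 by linear_combination ha' - e3)
      (sub_ne_zero.mpr had)
  have g3 : c₃ = 0 :=
    mulz (show (c-d)*c₃ = 0 by linear_combination f1 - f2) (sub_ne_zero.mpr hcd)
  have g2 : c₂ = 0 := by linear_combination f1 - (2*a+c)*g3
  have g1 : c₁ = 0 := by linear_combination ha' - 3*a^2*g3 - 2*a*g2
  have g0 : c₀ = 0 := by linear_combination ha - a^3*g3 - a^2*g2 - a*g1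
  intro x
  linear_combination x^3*g3 + x^2*g2 + x*g1 + g0

/-- A cubic with double roots at `a ≠ c` vanishes. -/
private lemma cubicC (c₃ c₂ c₁ c₀ a c : ℂ) (hac : a ≠ c)
    (ha : c₃*a^3+c₂*a^2+c₁*a+c₀ = 0) (ha' : 3*c₃*a^2+2*c₂*a+c₁ = 0)
    (hc : c₃*c^3+c₂*c^2+c₁*c+c₀ = 0) (hc' : 3*c₃*c^2+2*c₂*c+c₁ = 0) :
    ∀ x, c₃*x^3+c₂*x^2+c₁*x+c₀ = 0 := by
  have e2 : c₃*(a^2+a*c+c^2)+c₂*(a+c)+c₁ = 0 :=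
    mulz (show (a-c)*(c₃*(a^2+a*c+c^2)+c₂*(a+c)+c₁) = 0 by linear_combination ha - hc)
      (sub_ne_zero.mpr hac)
  have f : 3*c₃*(a+c)+2*c₂ = 0 :=
    mulz (show (a-c)*(3*c₃*(a+c)+2*c₂) = 0 by linear_combination ha' - hc')
      (sub_ne_zero.mpr hac)
  have f1 : c₃*(2*a+c)+c₂ = 0 :=
    mulz (show (a-c)*(c₃*(2*a+c)+c₂) = 0 by linear_combination ha' - e2)
      (sub_ne_zero.mpr hac)
  have g3 : c₃ = 0 :=
    mulz (show (a-c)*c₃ = 0 by linear_combination 2*f1 - f) (sub_ne_zero.mpr hac)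
  have g2 : c₂ = 0 := by linear_combination f1 - (2*a+c)*g3
  have g1 : c₁ = 0 := by linear_combination ha' - 3*a^2*g3 - 2*a*g2
  have g0 : c₀ = 0 := by linear_combination ha - a^3*g3 - a^2*g2 - a*g1
  intro x
  linear_combination x^3*g3 + x^2*g2 + x*g1 + g0

set_option maxHeartbeats 1000000 in
/-- The core computation, with the coefficients `g₁, g₂` abstracted. -/
private lemma main_core
    (x₀ x₁ x₂ y₀ y₁ y₂ z₀ z₁ z₂ : ℂ)
    (hx₀y₀ : x₀ ≠ y₀) (hx₀y₁ : x₀ ≠ y₁) (hx₁y₀ : x₁ ≠ y₀) (hx₁y₁ : x₁ ≠ y₁)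
    (hcon₁ : hTriplet x₀ x₁ z₀ z₁ z₂ y₀ y₁ y₂ = 0)
    (hcon₂ : hTriplet y₀ y₁ z₀ z₁ z₂ x₀ x₁ x₂ = 0)
    (hr2x₁ : (x₁-y₀)*(x₁-y₁)*(x₁-y₂) ≠ 0)
    (hr1y₁ : (y₁-x₀)*(y₁-x₁)*(y₁-x₂) ≠ 0)
    (g₁ g₂ : ℂ)
    (hG₁ : g₁ * ((y₁-x₀)*(y₁-x₁)*(y₁-x₂)) = (y₁-z₀)*(y₁-z₁)*(y₁-z₂))
    (hG₂ : g₂ * ((x₁-y₀)*(x₁-y₁)*(x₁-y₂)) = (x₁-z₀)*(x₁-z₁)*(x₁-z₂)) :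
    ∀ x, g₁ * ((x-x₀)*(x-x₁)*(x-x₂)) + g₂ * ((x-y₀)*(x-y₁)*(x-y₂))
        + (-1) * ((x-z₀)*(x-z₁)*(x-z₂)) = 0 := by
  simp only [hTriplet, cubicDD] at hcon₁ hcon₂
  obtain ⟨c₃, hc₃⟩ : ∃ c, c = g₁ + g₂ - 1 := ⟨_, rfl⟩
  obtain ⟨c₂, hc₂⟩ : ∃ c, c = -(g₁*(x₀+x₁+x₂) + g₂*(y₀+y₁+y₂) - (z₀+z₁+z₂)) := ⟨_, rfl⟩
  obtain ⟨c₁, hc₁⟩ : ∃ c, c = g₁*(x₀*x₁+x₀*x₂+x₁*x₂) + g₂*(y₀*y₁+y₀*y₂+y₁*y₂)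
      - (z₀*z₁+z₀*z₂+z₁*z₂) := ⟨_, rfl⟩
  obtain ⟨c₀, hc₀⟩ : ∃ c, c = -(g₁*(x₀*x₁*x₂) + g₂*(y₀*y₁*y₂) - z₀*z₁*z₂) := ⟨_, rfl⟩
  have hqa : c₃*x₁^3+c₂*x₁^2+c₁*x₁+c₀ = 0 := by
    rw [hc₃, hc₂, hc₁, hc₀]; linear_combination hG₂
  have hqb : c₃*y₁^3+c₂*y₁^2+c₁*y₁+c₀ = 0 := by
    rw [hc₃, hc₂, hc₁, hc₀]; linear_combination hG₁
  have hqc : c₃*x₀^3+c₂*x₀^2+c₁*x₀+c₀ = 0 := by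
    refine mulz ?_ hr2x₁
    rw [hc₃, hc₂, hc₁, hc₀]
    linear_combination (-(x₀-x₁))*hcon₁ + ((x₀-y₀)*(x₀-y₁)*(x₀-y₂))*hG₂
  have hqd : c₃*y₀^3+c₂*y₀^2+c₁*y₀+c₀ = 0 := by
    refine mulz ?_ hr1y₁
    rw [hc₃, hc₂, hc₁, hc₀]
    linear_combination (-(y₀-y₁))*hcon₂ + ((y₀-x₀)*(y₀-x₁)*(y₀-x₂))*hG₁
  have key : ∀ x, c₃*x^3+c₂*x^2+c₁*x+c₀ = 0 := by
    by_cases hx : x₀ = x₁ <;> by_cases hy : y₀ = y₁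
    · -- x₀ = x₁, y₀ = y₁ : double roots at x₀ and y₀
      subst hx; subst hy
      have hqa' : 3*c₃*x₀^2+2*c₂*x₀+c₁ = 0 := by
        refine mulz ?_ hr2x₁
        rw [hc₃, hc₂, hc₁]
        linear_combination (-1 : ℂ)*hcon₁
          + ((x₀-y₀)*(x₀-y₀)+(x₀-y₀)*(x₀-y₂)+(x₀-y₀)*(x₀-y₂))*hG₂
      have hqb' : 3*c₃*y₀^2+2*c₂*y₀+c₁ = 0 := by
        refine mulz ?_ hr1y₁
        rw [hc₃, hc₂, hc₁]
        linear_combination (-1 : ℂ)*hcon₂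
          + ((y₀-x₀)*(y₀-x₀)+(y₀-x₀)*(y₀-x₂)+(y₀-x₀)*(y₀-x₂))*hG₁
      exact cubicC c₃ c₂ c₁ c₀ x₀ y₀ hx₀y₀ hqa hqa' hqb hqb'
    · -- x₀ = x₁, y₀ ≠ y₁ : double root at x₀, simple at y₀, y₁
      subst hx
      have hqa' : 3*c₃*x₀^2+2*c₂*x₀+c₁ = 0 := by
        refine mulz ?_ hr2x₁
        rw [hc₃, hc₂, hc₁]
        linear_combination (-1 : ℂ)*hcon₁
          + ((x₀-y₀)*(x₀-y₁)+(x₀-y₀)*(x₀-y₂)+(x₀-y₁)*(x₀-y₂))*hG₂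
      exact cubicB c₃ c₂ c₁ c₀ x₀ y₀ y₁ hx₀y₀ hx₀y₁ hy hqa hqa' hqd hqb
    · -- x₀ ≠ x₁, y₀ = y₁ : double root at y₀, simple at x₀, x₁
      subst hy
      have hqb' : 3*c₃*y₀^2+2*c₂*y₀+c₁ = 0 := by
        refine mulz ?_ hr1y₁
        rw [hc₃, hc₂, hc₁]
        linear_combination (-1 : ℂ)*hcon₂
          + ((y₀-x₀)*(y₀-x₁)+(y₀-x₀)*(y₀-x₂)+(y₀-x₁)*(y₀-x₂))*hG₁
      exact cubicB c₃ c₂ c₁ c₀ y₀ x₀ x₁ (Ne.symm hx₀y₀) (Ne.symm hx₁y₀) hx hqb hqb' hqc hqa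
    · -- four simple roots
      exact cubicA c₃ c₂ c₁ c₀ x₀ x₁ y₀ y₁ hx hx₀y₀ hx₀y₁ hx₁y₀ hx₁y₁ hy hqc hqa hqd hqb
  intro x
  have h := key x
  rw [hc₃, hc₂, hc₁, hc₀] at h
  linear_combination h

/-- the three-orbit constraint forces linear dependence of
the three monic cubics whose roots are the three triplets. -/
theorem three_orbit_constraint_linear_dependence
    (x₀ x₁ x₂ y₀ y₁ y₂ z₀ z₁ z₂ : ℂ)
    (hdisj₁ : ({x₀, x₁, x₂} : Set ℂ) ∩ {y₀, y₁, y₂} = ∅)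
    (hdisj₂ : ({x₀, x₁, x₂} : Set ℂ) ∩ {z₀, z₁, z₂} = ∅)
    (hdisj₃ : ({y₀, y₁, y₂} : Set ℂ) ∩ {z₀, z₁, z₂} = ∅)
    (r1 r2 r3 : ℂ → ℂ)
    (hr1 : ∀ x, r1 x = (x-x₀)*(x-x₁)*(x-x₂))
    (hr2 : ∀ x, r2 x = (x-y₀)*(x-y₁)*(x-y₂))
    (hr3 : ∀ x, r3 x = (x-z₀)*(x-z₁)*(x-z₂))
    (hcon₁ : hTriplet x₀ x₁ z₀ z₁ z₂ y₀ y₁ y₂ = 0)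
    (hcon₂ : hTriplet y₀ y₁ z₀ z₁ z₂ x₀ x₁ x₂ = 0)
    (hr2x₁ : r2 x₁ ≠ 0) (hr1y₁ : r1 y₁ ≠ 0) :
    ∀ x, (r3 y₁ / r1 y₁) * r1 x + (r3 x₁ / r2 x₁) * r2 x + (-1) * r3 x = 0 := by
  have hsep : ∀ u v : ℂ, u ∈ ({x₀, x₁, x₂} : Set ℂ) → v ∈ ({y₀, y₁, y₂} : Set ℂ) →
      u ≠ v := by
    intro u v hu hv huv
    have hmem : u ∈ (({x₀, x₁, x₂} : Set ℂ) ∩ {y₀, y₁, y₂}) := ⟨hu, huv ▸ hv⟩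
    rw [hdisj₁] at hmem
    exact hmem
  have hx₀y₀ : x₀ ≠ y₀ := hsep x₀ y₀ (by simp) (by simp)
  have hx₀y₁ : x₀ ≠ y₁ := hsep x₀ y₁ (by simp) (by simp)
  have hx₁y₀ : x₁ ≠ y₀ := hsep x₁ y₀ (by simp) (by simp)
  have hx₁y₁ : x₁ ≠ y₁ := hsep x₁ y₁ (by simp) (by simp)
  rw [hr2 x₁] at hr2x₁
  rw [hr1 y₁] at hr1y₁
  have hG₁ : (r3 y₁ / r1 y₁) * ((y₁-x₀)*(y₁-x₁)*(y₁-x₂)) = (y₁-z₀)*(y₁-z₁)*(y₁-z₂) := by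
    rw [hr1 y₁, hr3 y₁]
    exact div_mul_cancel₀ _ hr1y₁
  have hG₂ : (r3 x₁ / r2 x₁) * ((x₁-y₀)*(x₁-y₁)*(x₁-y₂)) = (x₁-z₀)*(x₁-z₁)*(x₁-z₂) := by
    rw [hr2 x₁, hr3 x₁]
    exact div_mul_cancel₀ _ hr2x₁
  have H := main_core x₀ x₁ x₂ y₀ y₁ y₂ z₀ z₁ z₂ hx₀y₀ hx₀y₁ hx₁y₀ hx₁y₁
    hcon₁ hcon₂ hr2x₁ hr1y₁ _ _ hG₁ hG₂
  intro x
  rw [hr1 x, hr2 x, hr3 x]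
  exact H x
end

section
/- Define on pairs (a,b) ∈ ℂ× × ℂ× the binary operation (a,b)·(c,d) = (ac, bd), and define φ(a,b) = (a(1-b)/(a-b), (1-b)/(a-b)) for a ≠ b. Let (x₀,y₀) = φ(a,b) and (x₁,y₁) = φ(c,d) and (y₂,x₂) = φ(ac,bd) (assuming all denominators nonzero). Then (1-x₀)(1-x₁)(1-x₂) = (1-y₀)(1-y₁)(1-y₂) and x₀x₁x₂ = y₀y₁y₂. -/
/-- the substitution `φ(a,b) = (a(1-b)/(a-b), (1-b)/(a-b))`
conjugates componentwise multiplication on `ℂ× × ℂ×` to the binary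
operation defined by the three-orbit constraint with third orbit `(0,1,∞)`. -/
theorem phi_conjugates_multiplication_to_F1_binop
    (a b c d : ℂ)
    (ha : a ≠ 0) (hb : b ≠ 0) (hc : c ≠ 0) (hd : d ≠ 0)
    (hab : a ≠ b) (hcd : c ≠ d) (hacbd : a*c ≠ b*d)
    (x₀ y₀ x₁ y₁ x₂ y₂ : ℂ)
    (hx₀ : x₀ = a*(1-b)/(a-b)) (hy₀ : y₀ = (1-b)/(a-b))
    (hx₁ : x₁ = c*(1-d)/(c-d)) (hy₁ : y₁ = (1-d)/(c-d))
    (hy₂ : y₂ = (a*c)*(1-b*d)/(a*c-b*d)) (hx₂ : x₂ = (1-b*d)/(a*c-b*d)) :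
    (1-x₀)*(1-x₁)*(1-x₂) = (1-y₀)*(1-y₁)*(1-y₂) ∧
      x₀*x₁*x₂ = y₀*y₁*y₂ := by
  have h1 : a - b ≠ 0 := sub_ne_zero.mpr hab
  have h2 : c - d ≠ 0 := sub_ne_zero.mpr hcd
  have h3 : a*c - b*d ≠ 0 := sub_ne_zero.mpr hacbd
  subst hx₀ hy₀ hx₁ hy₁ hy₂ hx₂
  constructor <;> field_simp <;> ring
end

section
/- Define the binary operation on pairs of complex numbers: (x₀,y₀)·(x₁,y₁) := (y₂,x₂) where y₂ and x₂ are the unique solutions of the system x₀x₁x₂ = y₀y₁y₂ and x₀+x₁+x₂ = y₀+y₁+y₂ (i.e., x₂ and y₂ are determined rationally: subtracting gives x₂ - y₂ = (y₀+y₁) - (x₀+x₁) and x₂/y₂ determined from the product relation, assuming nondegeneracy). Then this operation is commutative and associative wherever defined. -/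
/-- The binary operation `(x₀,y₀)·(x₁,y₁) := (y₂,x₂)` defined by the system
`x₀x₁x₂ = y₀y₁y₂`, `x₀+x₁+x₂ = y₀+y₁+y₂` (third orbit `(0,∞,∞)`): solving the
system rationally gives, with `s = (y₀+y₁)-(x₀+x₁)` and `δ = y₀y₁-x₀x₁`,
`y₂ = s·x₀x₁/δ` and `x₂ = s·y₀y₁/δ`. -/
noncomputable def binopF2 (p q : ℂ × ℂ) : ℂ × ℂ :=
  ((((q.2 + p.2) - (q.1 + p.1)) * p.1 * q.1) / (p.2 * q.2 - p.1 * q.1),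
   (((q.2 + p.2) - (q.1 + p.1)) * p.2 * q.2) / (p.2 * q.2 - p.1 * q.1))

/-- `binopF2` is commutative, and associative wherever all the
denominators involved are nonzero. -/
theorem binopF2_comm_and_assoc :
    (∀ p q : ℂ × ℂ, binopF2 p q = binopF2 q p) ∧
    (∀ p q r : ℂ × ℂ,
      p.2 * q.2 - p.1 * q.1 ≠ 0 →
      q.2 * r.2 - q.1 * r.1 ≠ 0 →
      (binopF2 p q).2 * r.2 - (binopF2 p q).1 * r.1 ≠ 0 →
      p.2 * (binopF2 q r).2 - p.1 * (binopF2 q r).1 ≠ 0 →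
      binopF2 (binopF2 p q) r = binopF2 p (binopF2 q r)) := by
  constructor
  · intro p q
    simp only [binopF2, Prod.mk.injEq]
    constructor <;> ring_nf
  · rintro ⟨a, b⟩ ⟨c, d⟩ ⟨e, f⟩ h1 h2 h3 h4
    simp only [binopF2] at h3 h4 ⊢
    -- rewrite the composite denominators
    have e3 : ((d + b - (c + a)) * b * d) / (b * d - a * c) * f -
        ((d + b - (c + a)) * a * c) / (b * d - a * c) * e
        = (d + b - (c + a)) * (b * d * f - a * c * e) / (b * d - a * c) := by
      field_simp
    have e4 : b * (((f + d - (e + c)) * d * f) / (d * f - c * e)) -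
        a * (((f + d - (e + c)) * c * e) / (d * f - c * e))
        = (f + d - (e + c)) * (b * d * f - a * c * e) / (d * f - c * e) := by
      field_simp
    rw [e3] at h3
    rw [e4] at h4
    have hs : (d + b - (c + a)) ≠ 0 := fun h => h3 (by rw [h]; simp)
    have ht : (f + d - (e + c)) ≠ 0 := fun h => h4 (by rw [h]; simp)
    have hE : b * d * f - a * c * e ≠ 0 := fun h => h3 (by rw [h]; simp)
    have h1' : b * d - a * c ≠ 0 := h1
    have h2' : d * f - c * e ≠ 0 := h2
    have h1'' : d * b - c * a ≠ 0 := by rwa [mul_comm d, mul_comm c]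
    have h2'' : f * d - c * e ≠ 0 := by rwa [mul_comm f]
    refine Prod.ext ?_ ?_ <;> simp only <;>
      rw [div_eq_div_iff (by rw [e3]; exact h3) (by rw [e4]; exact h4)] <;>
      · rw [e3, e4]
        field_simp
        ring
end

section
/- Define ψ(a,b) = (a/b + b, a/b - b) for b ≠ 0. Then for all a,b,c,d ∈ ℂ with b,d,(b+d) ≠ 0, setting (x₀,y₀) = ψ(a,b), (x₁,y₁) = ψ(c,d), (y₂,x₂) = ψ(a+c, b+d), one has x₀+x₁+x₂ = y₀+y₁+y₂ and x₀²+x₁²+x₂² = y₀²+y₁²+y₂². -/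
/-- the substitution `ψ(a,b) = (a/b + b, a/b - b)` linearizes the
binary operation defined by the three-orbit constraint with third orbit
`(∞,∞,∞)` (equality of the first two power sums). -/
theorem psi_linearizes_F4_binop
    (a b c d : ℂ) (hb : b ≠ 0) (hd : d ≠ 0) (hbd : b + d ≠ 0)
    (x₀ y₀ x₁ y₁ x₂ y₂ : ℂ)
    (hx₀ : x₀ = a/b + b) (hy₀ : y₀ = a/b - b)
    (hx₁ : x₁ = c/d + d) (hy₁ : y₁ = c/d - d)
    (hy₂ : y₂ = (a+c)/(b+d) + (b+d)) (hx₂ : x₂ = (a+c)/(b+d) - (b+d)) :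
    x₀ + x₁ + x₂ = y₀ + y₁ + y₂ ∧
      x₀^2 + x₁^2 + x₂^2 = y₀^2 + y₁^2 + y₂^2 := by
  subst hx₀ hy₀ hx₁ hy₁ hx₂ hy₂
  constructor <;> field_simp <;> ring
end

section
/- In the group with presentation on generators σ₁,…,σ_m, ω (m ≥ 3) and relations σᵢ² = ω² = (σᵢω)⁴ = 1 for all i, (σᵢσⱼ)² = (σᵢωσⱼω)³ = 1 for all i ≠ j, and ((σᵢσⱼω)²σₖω)² = 1 for all pairwise distinct i,j,k, the elements πᵢⱼ := (ωσᵢσⱼ)³ (for i ≠ j) are involutions satisfying πᵢⱼσᵢ = σⱼπᵢⱼ, and πᵢⱼ commutes with σₖ for any k ∉ {i,j}. -/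
section VertexMapHelpers

variable {G : Type*} [Group G]

private lemma vm_comm_of {a b : G} (ha : a * a = 1) (hb : b * b = 1)
    (h : (a * b) ^ 2 = 1) : b * a = a * b := by
  have h' : (a * b) * (a * b) = 1 := by rw [← pow_two]; exact h
  have hinv : (a * b)⁻¹ = a * b := inv_eq_of_mul_eq_one_right h'
  calc b * a = b⁻¹ * a⁻¹ := by
        rw [inv_eq_of_mul_eq_one_right hb, inv_eq_of_mul_eq_one_right ha]
    _ = (a * b)⁻¹ := (mul_inv_rev a b).symm
    _ = a * b := hinv

set_option maxHeartbeats 2000000 in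
private lemma vm_part12 (a b w : G) (ha : a * a = 1) (hb : b * b = 1) (hw : w * w = 1)
    (hba : b * a = a * b) (h3a : (a * w) ^ 4 = 1) (h3b : (b * w) ^ 4 = 1)
    (h5ba : (b * w * a * w) ^ 3 = 1) :
    ((w * a * b) ^ 3) ^ 2 = 1 ∧ (w * a * b) ^ 3 * a = b * (w * a * b) ^ 3 := by
  have hai : a⁻¹ = a := inv_eq_of_mul_eq_one_right ha
  have hbi : b⁻¹ = b := inv_eq_of_mul_eq_one_right hb
  have hwi : w⁻¹ = w := inv_eq_of_mul_eq_one_right hw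
  have Ra : ∀ x : G, a * (a * x) = x := fun x => by rw [← mul_assoc, ha, one_mul]
  have Rb : ∀ x : G, b * (b * x) = x := fun x => by rw [← mul_assoc, hb, one_mul]
  have Rw : ∀ x : G, w * (w * x) = x := fun x => by rw [← mul_assoc, hw, one_mul]
  have Rab : ∀ x : G, b * (a * x) = a * (b * x) := fun x => by
    rw [← mul_assoc, hba, mul_assoc]
  have E3 : ∀ u v : G, u⁻¹ = u → v⁻¹ = v → (u * v) ^ 4 = 1 → (u * v) ^ 2 = (v * u) ^ 2 := by
    intro u v hu hv h4
    have h2 : ((u * v) ^ 2) ^ 2 = 1 := by rw [← pow_mul]; exact h4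
    have hx : (u * v) ^ 2 * (u * v) ^ 2 = 1 := by rw [← pow_two]; exact h2
    calc (u * v) ^ 2 = ((u * v) ^ 2)⁻¹ := (inv_eq_of_mul_eq_one_right hx).symm
      _ = ((u * v)⁻¹) ^ 2 := (inv_pow _ _).symm
      _ = (v * u) ^ 2 := by rw [mul_inv_rev, hu, hv]
  have E3a : (a * w) ^ 2 = (w * a) ^ 2 := E3 a w hai hwi h3a
  have E3b : (b * w) ^ 2 = (w * b) ^ 2 := E3 b w hbi hwi h3b
  have R3a : ∀ x : G, a * (w * (a * (w * x))) = w * (a * (w * (a * x))) := fun x => by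
    have h := congrArg (· * x) E3a
    simpa only [pow_two, mul_assoc] using h
  have R3b : ∀ x : G, b * (w * (b * (w * x))) = w * (b * (w * (b * x))) := fun x => by
    have h := congrArg (· * x) E3b
    simpa only [pow_two, mul_assoc] using h
  have t1 : (b * w * a * w) * ((b * w * a * w) * (b * w * a * w)) = 1 := by
    rw [← pow_two, ← pow_succ']
    exact h5ba
  have e1 : (b * w * a * w)⁻¹ = (b * w * a * w) * (b * w * a * w) :=
    inv_eq_of_mul_eq_one_right t1
  have e2 : (b * w * a * w) * (b * w * a * w) = w * (a * (w * b)) := by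
    rw [← e1, mul_inv_rev, mul_inv_rev, mul_inv_rev, hai, hbi, hwi]
  have R5ba : ∀ x : G,
      b * (w * (a * (w * (b * (w * (a * (w * x))))))) = w * (a * (w * (b * x))) := fun x => by
    have h := congrArg (· * x) e2
    simpa only [mul_assoc] using h
  have Rbr : ∀ x : G,
      b * (w * (a * (w * (b * x)))) = w * (a * (w * (b * (w * (a * (w * x)))))) := fun x => by
    have h := R5ba (w * (a * (w * x)))
    rw [Rw, Ra, Rw] at h
    exact h
  have K1 : ∀ x : G, w * (a * (b * (w * (a * (b * (w * (a * (b * (w * (a * (b * (w * (a * (b * (w * (a * (b * (x)))))))))))))))))) = x := by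
    intro x
    calc w * (a * (b * (w * (a * (b * (w * (a * (b * (w * (a * (b * (w * (a * (b * (w * (a * (b * (x))))))))))))))))))
      _ = w * (a * (b * (w * (a * (b * (w * (a * (b * (w * (a * (b * (w * (a * (b * (w * (b * (a * (x)))))))))))))))))) := congrArg (fun z => w * z) (congrArg (fun z => a * z) (congrArg (fun z => b * z) (congrArg (fun z => w * z) (congrArg (fun z => a * z) (congrArg (fun z => b * z) (congrArg (fun z => w * z) (congrArg (fun z => a * z) (congrArg (fun z => b * z) (congrArg (fun z => w * z) (congrArg (fun z => a * z) (congrArg (fun z => b * z) (congrArg (fun z => w * z) (congrArg (fun z => a * z) (congrArg (fun z => b * z) (congrArg (fun z => w * z) ((Rab (x)).symm))))))))))))))))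
      _ = w * (a * (b * (w * (a * (b * (w * (a * (b * (w * (a * (b * (w * (a * (b * (w * (b * (w * (w * (a * (x)))))))))))))))))))) := congrArg (fun z => w * z) (congrArg (fun z => a * z) (congrArg (fun z => b * z) (congrArg (fun z => w * z) (congrArg (fun z => a * z) (congrArg (fun z => b * z) (congrArg (fun z => w * z) (congrArg (fun z => a * z) (congrArg (fun z => b * z) (congrArg (fun z => w * z) (congrArg (fun z => a * z) (congrArg (fun z => b * z) (congrArg (fun z => w * z) (congrArg (fun z => a * z) (congrArg (fun z => b * z) (congrArg (fun z => w * z) (congrArg (fun z => b * z) ((Rw (a * (x))).symm)))))))))))))))))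
      _ = w * (a * (b * (w * (a * (b * (w * (a * (b * (w * (a * (b * (w * (a * (w * (b * (w * (b * (w * (a * (x)))))))))))))))))))) := congrArg (fun z => w * z) (congrArg (fun z => a * z) (congrArg (fun z => b * z) (congrArg (fun z => w * z) (congrArg (fun z => a * z) (congrArg (fun z => b * z) (congrArg (fun z => w * z) (congrArg (fun z => a * z) (congrArg (fun z => b * z) (congrArg (fun z => w * z) (congrArg (fun z => a * z) (congrArg (fun z => b * z) (congrArg (fun z => w * z) (congrArg (fun z => a * z) (R3b (w * (a * (x)))))))))))))))))
      _ = w * (a * (b * (w * (a * (b * (w * (a * (b * (w * (a * (w * (a * (w * (b * (w * (a * (w * (w * (b * (w * (a * (x)))))))))))))))))))))) := congrArg (fun z => w * z) (congrArg (fun z => a * z) (congrArg (fun z => b * z) (congrArg (fun z => w * z) (congrArg (fun z => a * z) (congrArg (fun z => b * z) (congrArg (fun z => w * z) (congrArg (fun z => a * z) (congrArg (fun z => b * z) (congrArg (fun z => w * z) (congrArg (fun z => a * z) (Rbr (w * (b * (w * (a * (x))))))))))))))))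
      _ = w * (a * (b * (w * (a * (b * (w * (a * (b * (w * (a * (w * (a * (w * (b * (w * (a * (b * (w * (a * (x)))))))))))))))))))) := congrArg (fun z => w * z) (congrArg (fun z => a * z) (congrArg (fun z => b * z) (congrArg (fun z => w * z) (congrArg (fun z => a * z) (congrArg (fun z => b * z) (congrArg (fun z => w * z) (congrArg (fun z => a * z) (congrArg (fun z => b * z) (congrArg (fun z => w * z) (congrArg (fun z => a * z) (congrArg (fun z => w * z) (congrArg (fun z => a * z) (congrArg (fun z => w * z) (congrArg (fun z => b * z) (congrArg (fun z => w * z) (congrArg (fun z => a * z) (Rw (b * (w * (a * (x)))))))))))))))))))))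
      _ = w * (a * (b * (w * (a * (b * (w * (a * (b * (a * (w * (a * (w * (w * (b * (w * (a * (b * (w * (a * (x)))))))))))))))))))) := congrArg (fun z => w * z) (congrArg (fun z => a * z) (congrArg (fun z => b * z) (congrArg (fun z => w * z) (congrArg (fun z => a * z) (congrArg (fun z => b * z) (congrArg (fun z => w * z) (congrArg (fun z => a * z) (congrArg (fun z => b * z) ((R3a (w * (b * (w * (a * (b * (w * (a * (x))))))))).symm)))))))))
      _ = w * (a * (b * (w * (a * (b * (w * (a * (b * (a * (w * (a * (b * (w * (a * (b * (w * (a * (x)))))))))))))))))) := congrArg (fun z => w * z) (congrArg (fun z => a * z) (congrArg (fun z => b * z) (congrArg (fun z => w * z) (congrArg (fun z => a * z) (congrArg (fun z => b * z) (congrArg (fun z => w * z) (congrArg (fun z => a * z) (congrArg (fun z => b * z) (congrArg (fun z => a * z) (congrArg (fun z => w * z) (congrArg (fun z => a * z) (Rw (b * (w * (a * (b * (w * (a * (x)))))))))))))))))))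
      _ = w * (a * (b * (w * (a * (b * (w * (a * (a * (b * (w * (a * (b * (w * (a * (b * (w * (a * (x)))))))))))))))))) := congrArg (fun z => w * z) (congrArg (fun z => a * z) (congrArg (fun z => b * z) (congrArg (fun z => w * z) (congrArg (fun z => a * z) (congrArg (fun z => b * z) (congrArg (fun z => w * z) (congrArg (fun z => a * z) (Rab (w * (a * (b * (w * (a * (b * (w * (a * (x)))))))))))))))))
      _ = w * (a * (b * (w * (a * (b * (w * (b * (w * (a * (b * (w * (a * (b * (w * (a * (x)))))))))))))))) := congrArg (fun z => w * z) (congrArg (fun z => a * z) (congrArg (fun z => b * z) (congrArg (fun z => w * z) (congrArg (fun z => a * z) (congrArg (fun z => b * z) (congrArg (fun z => w * z) (Ra (b * (w * (a * (b * (w * (a * (b * (w * (a * (x)))))))))))))))))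
      _ = w * (a * (b * (w * (a * (b * (w * (b * (w * (b * (a * (w * (a * (b * (w * (a * (x)))))))))))))))) := congrArg (fun z => w * z) (congrArg (fun z => a * z) (congrArg (fun z => b * z) (congrArg (fun z => w * z) (congrArg (fun z => a * z) (congrArg (fun z => b * z) (congrArg (fun z => w * z) (congrArg (fun z => b * z) (congrArg (fun z => w * z) ((Rab (w * (a * (b * (w * (a * (x))))))).symm)))))))))
      _ = w * (a * (b * (w * (a * (b * (b * (w * (b * (w * (a * (w * (a * (b * (w * (a * (x)))))))))))))))) := congrArg (fun z => w * z) (congrArg (fun z => a * z) (congrArg (fun z => b * z) (congrArg (fun z => w * z) (congrArg (fun z => a * z) (congrArg (fun z => b * z) ((R3b (a * (w * (a * (b * (w * (a * (x)))))))).symm))))))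
      _ = w * (a * (b * (w * (a * (w * (b * (w * (a * (w * (a * (b * (w * (a * (x)))))))))))))) := congrArg (fun z => w * z) (congrArg (fun z => a * z) (congrArg (fun z => b * z) (congrArg (fun z => w * z) (congrArg (fun z => a * z) (Rb (w * (b * (w * (a * (w * (a * (b * (w * (a * (x)))))))))))))))
      _ = w * (a * (w * (a * (w * (b * (a * (b * (w * (a * (x)))))))))) := congrArg (fun z => w * z) (congrArg (fun z => a * z) (R5ba (a * (b * (w * (a * (x)))))))
      _ = a * (w * (a * (w * (w * (b * (a * (b * (w * (a * (x)))))))))) := (R3a (w * (b * (a * (b * (w * (a * (x)))))))).symm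
      _ = a * (w * (a * (b * (a * (b * (w * (a * (x)))))))) := congrArg (fun z => a * z) (congrArg (fun z => w * z) (congrArg (fun z => a * z) (Rw (b * (a * (b * (w * (a * (x)))))))))
      _ = a * (w * (a * (a * (b * (b * (w * (a * (x)))))))) := congrArg (fun z => a * z) (congrArg (fun z => w * z) (congrArg (fun z => a * z) (Rab (b * (w * (a * (x)))))))
      _ = a * (w * (a * (a * (w * (a * (x)))))) := congrArg (fun z => a * z) (congrArg (fun z => w * z) (congrArg (fun z => a * z) (congrArg (fun z => a * z) (Rb (w * (a * (x)))))))
      _ = a * (w * (w * (a * (x)))) := congrArg (fun z => a * z) (congrArg (fun z => w * z) (Ra (w * (a * (x)))))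
      _ = a * (a * (x)) := congrArg (fun z => a * z) (Rw (a * (x)))
      _ = x := Ra (x)
  have K2 : ∀ x : G, w * (a * (b * (w * (a * (b * (w * (a * (b * (a * (x)))))))))) = b * (w * (a * (b * (w * (a * (b * (w * (a * (b * (x)))))))))) := by
    intro x
    calc w * (a * (b * (w * (a * (b * (w * (a * (b * (a * (x))))))))))
      _ = w * (b * (a * (w * (a * (b * (w * (a * (b * (a * (x)))))))))) := congrArg (fun z => w * z) ((Rab (w * (a * (b * (w * (a * (b * (a * (x))))))))).symm)
      _ = w * (b * (a * (w * (a * (w * (w * (b * (w * (a * (b * (a * (x)))))))))))) := congrArg (fun z => w * z) (congrArg (fun z => b * z) (congrArg (fun z => a * z) (congrArg (fun z => w * z) (congrArg (fun z => a * z) ((Rw (b * (w * (a * (b * (a * (x))))))).symm)))))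
      _ = w * (b * (w * (a * (w * (a * (w * (b * (w * (a * (b * (a * (x)))))))))))) := congrArg (fun z => w * z) (congrArg (fun z => b * z) (R3a (w * (b * (w * (a * (b * (a * (x)))))))))
      _ = w * (b * (w * (a * (w * (a * (w * (b * (w * (a * (w * (w * (b * (a * (x)))))))))))))) := congrArg (fun z => w * z) (congrArg (fun z => b * z) (congrArg (fun z => w * z) (congrArg (fun z => a * z) (congrArg (fun z => w * z) (congrArg (fun z => a * z) (congrArg (fun z => w * z) (congrArg (fun z => b * z) (congrArg (fun z => w * z) (congrArg (fun z => a * z) ((Rw (b * (a * (x)))).symm))))))))))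
      _ = w * (b * (w * (a * (b * (w * (a * (w * (b * (w * (b * (a * (x)))))))))))) := congrArg (fun z => w * z) (congrArg (fun z => b * z) (congrArg (fun z => w * z) (congrArg (fun z => a * z) ((Rbr (w * (b * (a * (x))))).symm))))
      _ = w * (b * (w * (b * (a * (w * (a * (w * (b * (w * (b * (a * (x)))))))))))) := congrArg (fun z => w * z) (congrArg (fun z => b * z) (congrArg (fun z => w * z) ((Rab (w * (a * (w * (b * (w * (b * (a * (x))))))))).symm)))
      _ = b * (w * (b * (w * (a * (w * (a * (w * (b * (w * (b * (a * (x)))))))))))) := (R3b (a * (w * (a * (w * (b * (w * (b * (a * (x)))))))))).symm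
      _ = b * (w * (b * (a * (w * (a * (w * (w * (b * (w * (b * (a * (x)))))))))))) := congrArg (fun z => b * z) (congrArg (fun z => w * z) (congrArg (fun z => b * z) ((R3a (w * (b * (w * (b * (a * (x))))))).symm)))
      _ = b * (w * (b * (a * (w * (a * (b * (w * (b * (a * (x)))))))))) := congrArg (fun z => b * z) (congrArg (fun z => w * z) (congrArg (fun z => b * z) (congrArg (fun z => a * z) (congrArg (fun z => w * z) (congrArg (fun z => a * z) (Rw (b * (w * (b * (a * (x)))))))))))
      _ = b * (w * (a * (b * (w * (a * (b * (w * (b * (a * (x)))))))))) := congrArg (fun z => b * z) (congrArg (fun z => w * z) (Rab (w * (a * (b * (w * (b * (a * (x)))))))))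
      _ = b * (w * (a * (b * (w * (a * (b * (w * (a * (b * (x)))))))))) := congrArg (fun z => b * z) (congrArg (fun z => w * z) (congrArg (fun z => a * z) (congrArg (fun z => b * z) (congrArg (fun z => w * z) (congrArg (fun z => a * z) (congrArg (fun z => b * z) (congrArg (fun z => w * z) (Rab (x)))))))))
  constructor
  · have h := K1 (1 : G)
    simp only [mul_one] at h
    calc ((w * a * b) ^ 3) ^ 2 = w * (a * (b * (w * (a * (b * (w * (a * (b * (w * (a * (b * (w * (a * (b * (w * (a * (b))))))))))))))))) := by simp only [pow_succ, pow_zero, one_mul, mul_assoc]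
      _ = 1 := h
  · have h := K2 (1 : G)
    simp only [mul_one] at h
    calc (w * a * b) ^ 3 * a = w * (a * (b * (w * (a * (b * (w * (a * (b * (a))))))))) := by simp only [pow_succ, pow_zero, one_mul, mul_assoc]
      _ = b * (w * (a * (b * (w * (a * (b * (w * (a * (b))))))))) := h
      _ = b * (w * a * b) ^ 3 := by simp only [pow_succ, pow_zero, one_mul, mul_assoc]

set_option maxHeartbeats 2000000 in
private lemma vm_part3 (a b c w : G) (ha : a * a = 1) (hb : b * b = 1) (hc : c * c = 1)
    (hw : w * w = 1) (hba : b * a = a * b) (hca : c * a = a * c) (hcb : c * b = b * c)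
    (h6 : ((a * b * w) ^ 2 * c * w) ^ 2 = 1) :
    (w * a * b) ^ 3 * c = c * (w * a * b) ^ 3 := by
  have hai : a⁻¹ = a := inv_eq_of_mul_eq_one_right ha
  have hbi : b⁻¹ = b := inv_eq_of_mul_eq_one_right hb
  have hci : c⁻¹ = c := inv_eq_of_mul_eq_one_right hc
  have hwi : w⁻¹ = w := inv_eq_of_mul_eq_one_right hw
  have Rw : ∀ x : G, w * (w * x) = x := fun x => by rw [← mul_assoc, hw, one_mul]
  have Rab : ∀ x : G, b * (a * x) = a * (b * x) := fun x => by
    rw [← mul_assoc, hba, mul_assoc]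
  have Rac : ∀ x : G, c * (a * x) = a * (c * x) := fun x => by
    rw [← mul_assoc, hca, mul_assoc]
  have Rbc : ∀ x : G, c * (b * x) = b * (c * x) := fun x => by
    rw [← mul_assoc, hcb, mul_assoc]
  have hss : ((a * b * w) ^ 2 * c * w) * ((a * b * w) ^ 2 * c * w) = 1 := by
    rw [← pow_two]; exact h6
  have hs : (a * b * w) ^ 2 * c * w = ((a * b * w) ^ 2 * c * w)⁻¹ :=
    (inv_eq_of_mul_eq_one_right hss).symm
  have R6abc : ∀ x : G,
      a * (b * (w * (a * (b * (w * (c * (w * x))))))) =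
        w * (c * (w * (b * (a * (w * (b * (a * x))))))) := fun x => by
    have h := congrArg (· * x) hs
    simp only [pow_two, mul_inv_rev, hai, hbi, hci, hwi, mul_assoc] at h
    exact h
  have K3 : ∀ x : G, w * (a * (b * (w * (a * (b * (w * (a * (b * (c * (x)))))))))) = c * (w * (a * (b * (w * (a * (b * (w * (a * (b * (x)))))))))) := by
    intro x
    calc w * (a * (b * (w * (a * (b * (w * (a * (b * (c * (x))))))))))
      _ = w * (a * (b * (w * (a * (b * (w * (a * (c * (b * (x)))))))))) := congrArg (fun z => w * z) (congrArg (fun z => a * z) (congrArg (fun z => b * z) (congrArg (fun z => w * z) (congrArg (fun z => a * z) (congrArg (fun z => b * z) (congrArg (fun z => w * z) (congrArg (fun z => a * z) ((Rbc (x)).symm))))))))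
      _ = w * (a * (b * (w * (a * (b * (w * (c * (a * (b * (x)))))))))) := congrArg (fun z => w * z) (congrArg (fun z => a * z) (congrArg (fun z => b * z) (congrArg (fun z => w * z) (congrArg (fun z => a * z) (congrArg (fun z => b * z) (congrArg (fun z => w * z) ((Rac (b * (x))).symm)))))))
      _ = w * (a * (b * (w * (a * (b * (w * (c * (w * (w * (a * (b * (x)))))))))))) := congrArg (fun z => w * z) (congrArg (fun z => a * z) (congrArg (fun z => b * z) (congrArg (fun z => w * z) (congrArg (fun z => a * z) (congrArg (fun z => b * z) (congrArg (fun z => w * z) (congrArg (fun z => c * z) ((Rw (a * (b * (x)))).symm))))))))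
      _ = w * (w * (c * (w * (b * (a * (w * (b * (a * (w * (a * (b * (x)))))))))))) := congrArg (fun z => w * z) (R6abc (w * (a * (b * (x)))))
      _ = c * (w * (b * (a * (w * (b * (a * (w * (a * (b * (x)))))))))) := Rw (c * (w * (b * (a * (w * (b * (a * (w * (a * (b * (x)))))))))))
      _ = c * (w * (a * (b * (w * (b * (a * (w * (a * (b * (x)))))))))) := congrArg (fun z => c * z) (congrArg (fun z => w * z) (Rab (w * (b * (a * (w * (a * (b * (x)))))))))
      _ = c * (w * (a * (b * (w * (a * (b * (w * (a * (b * (x)))))))))) := congrArg (fun z => c * z) (congrArg (fun z => w * z) (congrArg (fun z => a * z) (congrArg (fun z => b * z) (congrArg (fun z => w * z) (Rab (w * (a * (b * (x)))))))))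
  have h := K3 (1 : G)
  simp only [mul_one] at h
  calc (w * a * b) ^ 3 * c = w * (a * (b * (w * (a * (b * (w * (a * (b * (c))))))))) := by simp only [pow_succ, pow_zero, one_mul, mul_assoc]
    _ = c * (w * (a * (b * (w * (a * (b * (w * (a * (b))))))))) := h
    _ = c * (w * a * b) ^ 3 := by simp only [pow_succ, pow_zero, one_mul, mul_assoc]

end VertexMapHelpers

/-- in the complete vertex-map group, i.e. for any group
elements `σ₁,…,σₘ, ω` satisfying the defining relations, the elements
`πᵢⱼ = (ωσᵢσⱼ)³` are involutions intertwining `σᵢ` with `σⱼ` and commuting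
with the `σₖ` for `k ∉ {i,j}`. -/
theorem vertex_map_group_row_transpositions
    (G : Type*) [Group G] (m : ℕ) (hm : 3 ≤ m)
    (σ : Fin m → G) (ω : G)
    (h1 : ∀ i, (σ i)^2 = 1)
    (h2 : ω^2 = 1)
    (h3 : ∀ i, (σ i * ω)^4 = 1)
    (h4 : ∀ i j, i ≠ j → (σ i * σ j)^2 = 1)
    (h5 : ∀ i j, i ≠ j → (σ i * ω * σ j * ω)^3 = 1)
    (h6 : ∀ i j k, i ≠ j → j ≠ k → i ≠ k →
      ((σ i * σ j * ω)^2 * σ k * ω)^2 = 1) :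
    ∀ i j, i ≠ j →
      ((ω * σ i * σ j)^3)^2 = 1 ∧
      (ω * σ i * σ j)^3 * σ i = σ j * (ω * σ i * σ j)^3 ∧
      (∀ k, k ≠ i → k ≠ j →
        (ω * σ i * σ j)^3 * σ k = σ k * (ω * σ i * σ j)^3) := by
  intro i j hij
  have sq : ∀ t, σ t * σ t = 1 := fun t => by have := h1 t; rwa [pow_two] at this
  have hw : ω * ω = 1 := by have := h2; rwa [pow_two] at this
  have hba := vm_comm_of (sq i) (sq j) (h4 i j hij)
  obtain ⟨g1, g2⟩ := vm_part12 (σ i) (σ j) ω (sq i) (sq j) hw hba (h3 i) (h3 j)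
    (h5 j i hij.symm)
  refine ⟨g1, g2, ?_⟩
  intro k hki hkj
  exact vm_part3 (σ i) (σ j) (σ k) ω (sq i) (sq j) (sq k) hw hba
    (vm_comm_of (sq i) (sq k) (h4 i k (Ne.symm hki)))
    (vm_comm_of (sq j) (sq k) (h4 j k (Ne.symm hkj)))
    (h6 i j k hij (Ne.symm hkj) (Ne.symm hki))
end

section
/- Let h(x,y) be a symmetric biquadratic polynomial over ℂ with coefficients c₀,…,c₅ (h(x,y)=c₀+c₁(x+y)+c₂xy+c₃(x²+y²)+c₄xy(x+y)+c₅x²y²) satisfying c₁c₄+c₃² = c₀c₅+c₂c₃, and let w,z ∈ ℂ be such that η² := (w-z)h(w,z) ≠ 0. Define r₁(x) = (w-x)h(w,x)/η and r₂(x) = (z-x)h(z,x)/η. Then r₁,r₂ are polynomials of degree at most 3 in x and h(x,y)·(x-y) = r₁(x)r₂(y) - r₂(x)r₁(y) for all x,y. -/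
/-- an idempotent symmetric biquadratic `h` admits the
Cayley–Bezout divided-difference form: with `η² = (w-z)h(w,z) ≠ 0`,
`r₁(x) = (w-x)h(w,x)/η` and `r₂(x) = (z-x)h(z,x)/η` are polynomials of
degree at most 3 and `h(x,y)(x-y) = r₁(x)r₂(y) - r₂(x)r₁(y)`. -/
theorem idempotent_biquadratic_bezout_form
    (c₀ c₁ c₂ c₃ c₄ c₅ : ℂ)
    (h : ℂ → ℂ → ℂ)
    (hdef : ∀ x y, h x y =
      c₀ + c₁*(x+y) + c₂*x*y + c₃*(x^2+y^2) + c₄*x*y*(x+y) + c₅*x^2*y^2)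
    (hc : c₁*c₄ + c₃^2 = c₀*c₅ + c₂*c₃)
    (w z η : ℂ) (hη : η^2 = (w - z) * h w z) (hη0 : η ≠ 0)
    (r₁ r₂ : ℂ → ℂ)
    (hr₁ : ∀ x, r₁ x = (w - x) * h w x / η)
    (hr₂ : ∀ x, r₂ x = (z - x) * h z x / η) :
    (∃ p q : Polynomial ℂ, p.degree ≤ 3 ∧ q.degree ≤ 3 ∧
      (∀ x, p.eval x = r₁ x) ∧ (∀ x, q.eval x = r₂ x)) ∧
    (∀ x y, h x y * (x - y) = r₁ x * r₂ y - r₂ x * r₁ y) := by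
  constructor
  · refine ⟨Polynomial.C (1/η) * ((Polynomial.C w - Polynomial.X) *
        (Polynomial.C (c₀+c₁*w+c₃*w^2) + Polynomial.C (c₁+c₂*w+c₄*w^2) * Polynomial.X
          + Polynomial.C (c₃+c₄*w+c₅*w^2) * Polynomial.X^2)),
      Polynomial.C (1/η) * ((Polynomial.C z - Polynomial.X) *
        (Polynomial.C (c₀+c₁*z+c₃*z^2) + Polynomial.C (c₁+c₂*z+c₄*z^2) * Polynomial.X
          + Polynomial.C (c₃+c₄*z+c₅*z^2) * Polynomial.X^2)), ?_, ?_, ?_, ?_⟩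
    · compute_degree
    · compute_degree
    · intro x
      rw [hr₁ x, hdef]
      simp only [Polynomial.eval_mul, Polynomial.eval_add, Polynomial.eval_sub,
        Polynomial.eval_C, Polynomial.eval_X, Polynomial.eval_pow]
      field_simp
      ring_nf
    · intro x
      rw [hr₂ x, hdef]
      simp only [Polynomial.eval_mul, Polynomial.eval_add, Polynomial.eval_sub,
        Polynomial.eval_C, Polynomial.eval_X, Polynomial.eval_pow]
      field_simp
      ring_nf
  · intro x y
    have key : h x y * (x - y) * η^2 =
        ((w-x)*h w x)*((z-y)*h z y) - ((z-x)*h z x)*((w-y)*h w y) := by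
      rw [hη]
      simp only [hdef]
      linear_combination (-(z*x^2*y^3 - z*x^3*y^2 - z^2*x*y^3 + z^2*x^3*y + z^3*x*y^2
        - z^3*x^2*y - w*x^2*y^3 + w*x^3*y^2 + w*z^2*y^3 - w*z^2*x^3 - w*z^3*y^2
        + w*z^3*x^2 + w^2*x*y^3 - w^2*x^3*y - w^2*z*y^3 + w^2*z*x^3 + w^2*z^3*y
        - w^2*z^3*x - w^3*x*y^2 + w^3*x^2*y + w^3*z*y^2 - w^3*z*x^2 - w^3*z^2*y
        + w^3*z^2*x)) * hc
    rw [hr₁ x, hr₁ y, hr₂ x, hr₂ y, div_mul_div_comm, div_mul_div_comm,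
      div_sub_div_same, eq_div_iff (mul_ne_zero hη0 hη0)]
    linear_combination key
end
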